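/- Let X and Y be jointly distributed discrete random variables, with X taking values in a finite set Σ. If I_∞^β(X;Y) ≤ k for some k > 0 and 0 ≤ β ≤ 3(1 − 2^{−k})/20, then the mutual information measured in nats satisfies I(X;Y) ≤ 2k·ln(2) + (2β · log₂(|Σ|/(2β))) / (1 − 2^{−k}). -/

import Mathlib

open scoped ENNReal

/-- The probability that a sample from the probability mass function `μ` lands in `S`. -/
noncomputable def prob {α : Type*} (μ : PMF α) (S : Set α) : ℝ :=
  (μ.toOuterMeasure S).toReal

/-- The independent coupling of two distributions: a pair whose components are independent
with the given marginal distributions. -/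
noncomputable def indepPair {α β : Type*} (p : PMF α) (q : PMF β) : PMF (α × β) :=
  p.bind fun a => q.map fun b => (a, b)

/-- `MaxInfoLe μ b k` : the `b`-approximate max-information of the joint distribution `μ`
is at most `k` (measured in bits):  for every event `O` with `Pr[(X,Z) ∈ O] > b`,
`Pr[(X,Z) ∈ O] - b ≤ 2^k · Pr[X ⊗ Z ∈ O]`. -/
def MaxInfoLe {α β : Type*} (μ : PMF (α × β)) (b k : ℝ) : Prop :=
  ∀ O : Set (α × β), b < prob μ O →
    prob μ O - b ≤ 2 ^ k * prob (indepPair (μ.map Prod.fst) (μ.map Prod.snd)) O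

/-- The mutual information, measured in nats, between the two components of a joint
distribution `μ`. -/
noncomputable def mutualInfoNats {α β : Type*} (μ : PMF (α × β)) : ℝ :=
  ∑' q : α × β, (μ q).toReal *
    Real.log ((μ q).toReal / (((μ.map Prod.fst) q.1).toReal * ((μ.map Prod.snd) q.2).toReal))

attribute [local instance] Classical.propDecidable

lemma aux_map_fst {σ Y : Type*} (μ : PMF (σ × Y)) (a : σ) :
    (μ.map Prod.fst) a = ∑' y, μ (a, y) := by
  calc (μ.map Prod.fst) a = ∑' (q : σ × Y), if a = q.1 then μ q else 0 :=
        PMF.map_apply _ _ _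
    _ = ∑' (a' : σ) (y : Y), if a = a' then μ (a', y) else 0 :=
        ENNReal.tsum_prod (f := fun a' y => if a = a' then μ (a', y) else 0)
    _ = ∑' (a' : σ), if a' = a then (∑' y, μ (a', y)) else 0 := by
        refine tsum_congr fun a' => ?_
        by_cases h : a = a' <;> simp [h, eq_comm]
    _ = ∑' y, μ (a, y) :=
        (tsum_eq_single a fun a' ha' => if_neg ha').trans (if_pos rfl)

lemma aux_map_snd {σ Y : Type*} (μ : PMF (σ × Y)) (y : Y) :
    (μ.map Prod.snd) y = ∑' a, μ (a, y) := by
  calc (μ.map Prod.snd) y = ∑' (q : σ × Y), if y = q.2 then μ q else 0 :=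
        PMF.map_apply _ _ _
    _ = ∑' (a : σ) (y' : Y), if y = y' then μ (a, y') else 0 :=
        ENNReal.tsum_prod (f := fun a y' => if y = y' then μ (a, y') else 0)
    _ = ∑' a, μ (a, y) := by
        refine tsum_congr fun a => ?_
        calc (∑' y', if y = y' then μ (a, y') else 0)
            = ∑' y', if y' = y then μ (a, y') else 0 := by
              refine tsum_congr fun y' => ?_; by_cases h : y = y' <;> simp [h, eq_comm]
          _ = μ (a, y) := (tsum_eq_single y fun y' hy' => if_neg hy').trans (if_pos rfl)

lemma aux_indep {α β : Type*} (p : PMF α) (q : PMF β) (a : α) (b : β) :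
    indepPair p q (a, b) = p a * q b := by
  rw [indepPair, PMF.bind_apply]
  have key : ∀ a' : α, p a' * (PMF.map (fun b' => (a', b')) q) (a, b)
      = if a' = a then p a' * q b else 0 := by
    intro a'
    rw [PMF.map_apply]
    by_cases h : a' = a
    · subst h
      rw [if_pos rfl]
      congr 1
      exact (tsum_eq_single b fun b' hb' =>
        if_neg (fun hc => hb' ((congrArg Prod.snd hc).symm))).trans (if_pos rfl)
    · rw [if_neg h]
      refine mul_eq_zero.2 (Or.inr (ENNReal.tsum_eq_zero.2 fun b' => ?_))
      exact if_neg fun hc => h ((congrArg Prod.fst hc).symm)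
  rw [tsum_congr key]
  exact (tsum_eq_single a fun a' ha' => if_neg ha').trans (if_pos rfl)

/-- probability of a set as a real tsum of the indicator. -/
lemma aux_prob_eq {α : Type*} (μ : PMF α) (S : Set α) :
    prob μ S = ∑' q, S.indicator (fun q => (μ q).toReal) q := by
  rw [prob, PMF.toOuterMeasure_apply, ENNReal.tsum_toReal_eq]
  · refine tsum_congr fun q => ?_
    by_cases h : q ∈ S <;> simp [Set.indicator, h]
  · intro q
    by_cases h : q ∈ S <;> simp [Set.indicator, h, PMF.apply_ne_top]

set_option maxHeartbeats 1000000 in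
/-- Let `X` and `Y` be jointly distributed discrete random variables (with
joint distribution `μ`), where `X` takes values in a finite set `σ`.  If `I_∞^β(X;Y) ≤ k` for
some `k > 0` and `0 ≤ β ≤ 3(1 - 2^{-k})/20`, then the mutual information measured in nats
satisfies `I(X;Y) ≤ 2k·ln 2 + (2β · log₂(|σ|/(2β))) / (1 - 2^{-k})`. -/
theorem stmt_3 {σ Y : Type*} [Fintype σ] (μ : PMF (σ × Y)) (k β : ℝ)
    (hk : 0 < k) (hβ0 : 0 ≤ β) (hβ : β ≤ 3 * (1 - 2 ^ (-k)) / 20)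
    (hmi : MaxInfoLe μ β k) :
    mutualInfoNats μ ≤
      2 * k * Real.log 2 +
        (2 * β * Real.logb 2 ((Fintype.card σ : ℝ) / (2 * β))) / (1 - 2 ^ (-k)) := by
  classical
  obtain ⟨q0, hq0⟩ := μ.support_nonempty
  haveI : Nonempty σ := ⟨q0.1⟩
  set n : ℝ := (Fintype.card σ : ℝ) with hn
  set c₀ : ℝ := 1 - 2 ^ (-k) with hc₀def
  have h2mk : (0:ℝ) < 2 ^ (-k) := Real.rpow_pos_of_pos two_pos _
  have h2mklt : (2:ℝ) ^ (-k) < 1 :=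
    Real.rpow_lt_one_of_one_lt_of_neg one_lt_two (neg_neg_of_pos hk)
  have hc₀ : 0 < c₀ := by rw [hc₀def]; linarith
  have hc₀1 : c₀ ≤ 1 := by rw [hc₀def]; linarith
  set m : ℝ := β / c₀ with hmdef
  have hm0 : 0 ≤ m := div_nonneg hβ0 hc₀.le
  have hm320 : m ≤ 3 / 20 := by
    rw [hmdef, div_le_iff₀ hc₀]; linarith
  have hβm : β ≤ m := by
    rw [hmdef, le_div_iff₀ hc₀]; nlinarith
  have hn1 : 1 ≤ n := by
    rw [hn]; exact_mod_cast Fintype.card_pos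
  have hn0 : (0:ℝ) < n := lt_of_lt_of_le one_pos hn1
  -- real mass functions
  set p : σ × Y → ℝ := fun q => (μ q).toReal with hpdef
  set P1 : σ → ℝ := fun a => ((μ.map Prod.fst) a).toReal with hP1def
  set P2 : Y → ℝ := fun y => ((μ.map Prod.snd) y).toReal with hP2def
  have hp0 : ∀ q, 0 ≤ p q := fun q => ENNReal.toReal_nonneg
  have hP10 : ∀ a, 0 ≤ P1 a := fun a => ENNReal.toReal_nonneg
  have hP20 : ∀ y, 0 ≤ P2 y := fun y => ENNReal.toReal_nonneg
  have hP1le1 : ∀ a, P1 a ≤ 1 := by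
    intro a
    have := (μ.map Prod.fst).coe_le_one a
    calc P1 a ≤ (1:ℝ≥0∞).toReal := ENNReal.toReal_mono ENNReal.one_ne_top this
      _ = 1 := ENNReal.toReal_one
  have hpP1 : ∀ q : σ × Y, p q ≤ P1 q.1 := by
    intro q
    refine ENNReal.toReal_mono (PMF.apply_ne_top _ _) ?_
    rw [aux_map_fst]
    exact ENNReal.le_tsum q.2
  have hpP2 : ∀ q : σ × Y, p q ≤ P2 q.2 := by
    intro q
    refine ENNReal.toReal_mono (PMF.apply_ne_top _ _) ?_
    rw [aux_map_snd]
    exact ENNReal.le_tsum q.1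
  have hsp : Summable p :=
    ENNReal.summable_toReal (by rw [PMF.tsum_coe]; exact ENNReal.one_ne_top)
  have hsump : ∑' q, p q = 1 := by
    rw [hpdef, ← ENNReal.tsum_toReal_eq (fun q => PMF.apply_ne_top _ _), PMF.tsum_coe,
      ENNReal.toReal_one]
  have hsP2 : Summable P2 :=
    ENNReal.summable_toReal (by rw [PMF.tsum_coe]; exact ENNReal.one_ne_top)
  have hsP2prod : Summable (fun q : σ × Y => P2 q.2) := by
    have := (Summable.of_finite (f := fun _ : σ => (1:ℝ))).mul_of_nonneg hsP2
      (fun _ => zero_le_one) hP20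
    simpa using this
  -- the three functions
  set F : σ × Y → ℝ := fun q => p q * Real.log (p q / (P1 q.1 * P2 q.2)) with hFdef
  set G : σ × Y → ℝ := fun q => p q * Real.log (P2 q.2 / p q) with hGdef
  set H : σ × Y → ℝ := fun q => p q * (-Real.log (P1 q.1)) with hHdef
  have hppos : ∀ q : σ × Y, p q ≠ 0 → 0 < p q := fun q hq => (hp0 q).lt_of_ne (Ne.symm hq)
  have hG0 : ∀ q, 0 ≤ G q := by
    intro q
    by_cases hq : p q = 0
    · simp [hGdef, hq]
    · have h1 := hppos q hq
      exact mul_nonneg (hp0 q) (Real.log_nonneg ((one_le_div h1).2 (hpP2 q)))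
  have hGP2 : ∀ q, G q ≤ P2 q.2 := by
    intro q
    by_cases hq : p q = 0
    · simp [hGdef, hq, hP20]
    · have h1 := hppos q hq
      have h2 : 0 < P2 q.2 / p q := div_pos (lt_of_lt_of_le h1 (hpP2 q)) h1
      calc G q ≤ p q * (P2 q.2 / p q - 1) :=
            mul_le_mul_of_nonneg_left (Real.log_le_sub_one_of_pos h2) (hp0 q)
        _ = P2 q.2 - p q := by field_simp
        _ ≤ P2 q.2 := by linarith [hp0 q]
  have hH0 : ∀ q, 0 ≤ H q := fun q =>
    mul_nonneg (hp0 q) (neg_nonneg.2 (Real.log_nonpos (hP10 _) (hP1le1 _)))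
  have hFHG : ∀ q, F q = H q - G q := by
    intro q
    by_cases hq : p q = 0
    · simp [hFdef, hGdef, hHdef, hq]
    · have h1 := hppos q hq
      have hP1p : 0 < P1 q.1 := lt_of_lt_of_le h1 (hpP1 q)
      have hP2p : 0 < P2 q.2 := lt_of_lt_of_le h1 (hpP2 q)
      rw [hFdef, hGdef, hHdef]
      simp only
      rw [Real.log_div hq (by positivity), Real.log_mul (ne_of_gt hP1p) (ne_of_gt hP2p),
        Real.log_div (ne_of_gt hP2p) hq]
      ring
  set C : ℝ := ∑ a : σ, (-Real.log (P1 a)) with hCdef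
  have hLC : ∀ a : σ, -Real.log (P1 a) ≤ C := by
    intro a
    rw [hCdef]
    exact Finset.single_le_sum (f := fun a => -Real.log (P1 a))
      (fun i _ => neg_nonneg.2 (Real.log_nonpos (hP10 _) (hP1le1 _))) (Finset.mem_univ a)
  have hsH : Summable H := by
    refine Summable.of_nonneg_of_le hH0 (fun q => ?_) (hsp.mul_right C)
    exact mul_le_mul_of_nonneg_left (hLC q.1) (hp0 q)
  have hsG : Summable G := Summable.of_nonneg_of_le hG0 hGP2 hsP2prod
  have hsF : Summable F := by
    have : F = fun q => H q - G q := funext hFHG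
    rw [this]; exact hsH.sub hsG
  -- the heavy set
  set O : Set (σ × Y) := {q | 2 ^ (2 * k) * (P1 q.1 * P2 q.2) < p q} with hOdef
  have hsplit : ∑' q, F q = (∑' q, O.indicator F q) + ∑' q, Oᶜ.indicator F q := by
    rw [← Summable.tsum_add (hsF.indicator O) (hsF.indicator Oᶜ)]
    exact tsum_congr fun q => (congrFun (Set.indicator_self_add_compl O F) q).symm
  have hklog : 0 ≤ 2 * k * Real.log 2 := by positivity
  -- bound off the heavy set
  have hB1 : ∑' q, Oᶜ.indicator F q ≤ 2 * k * Real.log 2 := by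
    have hpt : ∀ q, Oᶜ.indicator F q ≤ p q * (2 * k * Real.log 2) := by
      intro q
      by_cases hq : q ∈ Oᶜ
      · rw [Set.indicator_of_mem hq]
        by_cases hpq : p q = 0
        · simp [hFdef, hpq]
        · have h1 := hppos q hpq
          have hd : 0 < P1 q.1 * P2 q.2 :=
            mul_pos (lt_of_lt_of_le h1 (hpP1 q)) (lt_of_lt_of_le h1 (hpP2 q))
          have hratio : p q / (P1 q.1 * P2 q.2) ≤ 2 ^ (2 * k) := by
            rw [div_le_iff₀ hd]
            exact not_lt.1 hq
          have hlog : Real.log (p q / (P1 q.1 * P2 q.2)) ≤ 2 * k * Real.log 2 :=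
            calc Real.log (p q / (P1 q.1 * P2 q.2)) ≤ Real.log ((2:ℝ) ^ (2 * k)) :=
                  Real.log_le_log (div_pos h1 hd) hratio
              _ = 2 * k * Real.log 2 := Real.log_rpow two_pos _
          exact mul_le_mul_of_nonneg_left hlog (hp0 q)
      · rw [Set.indicator_of_notMem hq]
        exact mul_nonneg (hp0 q) hklog
    calc ∑' q, Oᶜ.indicator F q ≤ ∑' q, p q * (2 * k * Real.log 2) :=
          Summable.tsum_le_tsum hpt (hsF.indicator _) (hsp.mul_right _)
      _ = (∑' q, p q) * (2 * k * Real.log 2) := tsum_mul_right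
      _ = 2 * k * Real.log 2 := by rw [hsump, one_mul]
  -- slice sums
  set c : σ → ℝ := fun a => ∑' y, O.indicator p (a, y) with hcdef
  have hindp0 : ∀ q, 0 ≤ O.indicator p q := fun q => Set.indicator_nonneg (fun x _ => hp0 x) q
  have hindple : ∀ q, O.indicator p q ≤ p q := fun q => Set.indicator_le_self' (fun x _ => hp0 x) q
  have hspa : ∀ a, Summable fun y => p (a, y) := fun a => hsp.prod_factor a
  have hsOpa : ∀ a, Summable fun y => O.indicator p (a, y) := fun a =>
    Summable.of_nonneg_of_le (fun y => hindp0 _) (fun y => hindple _) (hspa a)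
  have hc0 : ∀ a, 0 ≤ c a := fun a => tsum_nonneg fun y => hindp0 _
  have hP1sum : ∀ a, P1 a = ∑' y, p (a, y) := by
    intro a
    rw [hP1def]
    simp only
    rw [aux_map_fst, ENNReal.tsum_toReal_eq (fun y => PMF.apply_ne_top _ _)]
  have hcP1 : ∀ a, c a ≤ P1 a := by
    intro a
    rw [hP1sum a]
    exact Summable.tsum_le_tsum (fun y => hindple _) (hsOpa a) (hspa a)
  have hsOp : Summable (O.indicator p) := hsp.indicator O
  have hprobO : prob μ O = ∑ a : σ, c a := by
    rw [aux_prob_eq μ O]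
    rw [Summable.tsum_prod' hsOp hsOpa, tsum_fintype]
  have hs0 : 0 ≤ prob μ O := ENNReal.toReal_nonneg
  -- max-information bound on the heavy set
  have hsm : prob μ O ≤ m := by
    by_cases hcase : prob μ O ≤ β
    · exact le_trans hcase hβm
    · push_neg at hcase
      have h1 := hmi O hcase
      set ν : PMF (σ × Y) := indepPair (μ.map Prod.fst) (μ.map Prod.snd) with hνdef
      have hνr : ∀ q : σ × Y, (ν q).toReal = P1 q.1 * P2 q.2 := by
        intro q
        have h : ν q = (μ.map Prod.fst) q.1 * (μ.map Prod.snd) q.2 := by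
          rw [hνdef]; exact aux_indep _ _ q.1 q.2
        rw [h, ENNReal.toReal_mul]
      have hνpt : ∀ q, O.indicator (fun q => (ν q).toReal) q
          ≤ 2 ^ (-(2 * k)) * O.indicator p q := by
        intro q
        by_cases hq : q ∈ O
        · rw [Set.indicator_of_mem hq, Set.indicator_of_mem hq, hνr]
          have hqO : 2 ^ (2 * k) * (P1 q.1 * P2 q.2) ≤ p q := le_of_lt hq
          have h2 : (0:ℝ) < 2 ^ (-(2 * k)) := Real.rpow_pos_of_pos two_pos _
          calc P1 q.1 * P2 q.2 = 2 ^ (-(2 * k)) * (2 ^ (2 * k) * (P1 q.1 * P2 q.2)) := by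
                rw [← mul_assoc, ← Real.rpow_add two_pos]
                norm_num
            _ ≤ 2 ^ (-(2 * k)) * p q := mul_le_mul_of_nonneg_left hqO h2.le
        · rw [Set.indicator_of_notMem hq, Set.indicator_of_notMem hq, mul_zero]
      have hsν : Summable (fun q : σ × Y => (ν q).toReal) :=
        ENNReal.summable_toReal (by rw [PMF.tsum_coe]; exact ENNReal.one_ne_top)
      have hνsum : prob ν O ≤ 2 ^ (-(2 * k)) * prob μ O := by
        rw [aux_prob_eq ν O, aux_prob_eq μ O, ← tsum_mul_left]
        exact Summable.tsum_le_tsum hνpt (hsν.indicator O) (hsOp.mul_left _)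
      have h2 : prob μ O - β ≤ 2 ^ (-k) * prob μ O := by
        calc prob μ O - β ≤ 2 ^ k * prob ν O := h1
          _ ≤ 2 ^ k * (2 ^ (-(2 * k)) * prob μ O) :=
              mul_le_mul_of_nonneg_left hνsum (Real.rpow_nonneg (by norm_num) _)
          _ = 2 ^ (-k) * prob μ O := by
              rw [← mul_assoc, ← Real.rpow_add two_pos]
              ring_nf
      rw [hmdef, le_div_iff₀ hc₀]
      have hexp : (2:ℝ) ^ (-k) = 1 - c₀ := by rw [hc₀def]; ring
      rw [hexp] at h2
      nlinarith
  -- heavy-set term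
  have hOH : ∑' q, O.indicator H q = ∑ a : σ, c a * (-Real.log (P1 a)) := by
    have heq : O.indicator H = fun q : σ × Y => O.indicator p q * (-Real.log (P1 q.1)) := by
      funext q
      by_cases hq : q ∈ O
      · rw [Set.indicator_of_mem hq, Set.indicator_of_mem hq]
      · rw [Set.indicator_of_notMem hq, Set.indicator_of_notMem hq, zero_mul]
    rw [heq]
    have hsum : Summable fun q : σ × Y => O.indicator p q * (-Real.log (P1 q.1)) := by
      refine Summable.of_nonneg_of_le
        (fun q => mul_nonneg (hindp0 q) (neg_nonneg.2 (Real.log_nonpos (hP10 _) (hP1le1 _))))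
        (fun q => ?_) (hsp.mul_right C)
      exact mul_le_mul (hindple q) (hLC q.1)
        (neg_nonneg.2 (Real.log_nonpos (hP10 _) (hP1le1 _))) (hp0 q)
    have hslice : ∀ a : σ, Summable fun y => O.indicator p (a, y) * (-Real.log (P1 (a, y).1)) := by
      intro a
      simpa using (hsOpa a).mul_right (-Real.log (P1 a))
    have hps := Summable.tsum_prod' (f := fun q : σ × Y => O.indicator p q * (-Real.log (P1 q.1)))
      hsum hslice
    rw [hps, tsum_fintype]
    refine Finset.sum_congr rfl fun a _ => ?_
    simp only [hcdef]
    exact tsum_mul_right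
  have hB2 : ∑' q, O.indicator F q ≤ ∑' q, O.indicator H q := by
    refine Summable.tsum_le_tsum (fun q => ?_) (hsF.indicator O) (hsH.indicator O)
    by_cases hq : q ∈ O
    · rw [Set.indicator_of_mem hq, Set.indicator_of_mem hq, hFHG q]
      linarith [hG0 q]
    · rw [Set.indicator_of_notMem hq, Set.indicator_of_notMem hq]
  -- the combinatorial bound on the heavy-set term
  set s : ℝ := prob μ O with hsdef
  have hcsum : ∑ a : σ, c a = s := hprobO.symm
  have hsumzero : s = 0 → ∑ a : σ, c a * (-Real.log (P1 a)) = 0 := by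
    intro hsz
    have hca : ∀ a ∈ Finset.univ, c a = 0 :=
      (Finset.sum_eq_zero_iff_of_nonneg (fun a _ => hc0 a)).1 (hcsum.trans hsz)
    exact Finset.sum_eq_zero fun a ha => by rw [hca a ha, zero_mul]
  have hchain : ∑ a : σ, c a * (-Real.log (P1 a)) ≤
      (2 * β * Real.logb 2 (n / (2 * β))) / c₀ := by
    rcases eq_or_lt_of_le hβ0 with hβz | hβpos
    · -- β = 0 forces s = 0 and the RHS is 0
      have hmz : m = 0 := by rw [hmdef, ← hβz, zero_div]
      have hsz : s = 0 := le_antisymm (hmz ▸ hsm) hs0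
      rw [hsumzero hsz, ← hβz]
      simp
    · -- β > 0
      have h2β : 0 < 2 * β := by linarith
      have h2β310 : 2 * β ≤ 3 / 10 := by nlinarith
      have hu : (10:ℝ)/3 ≤ n / (2 * β) := by
        rw [le_div_iff₀ h2β]; nlinarith
      have hupos : 0 < n / (2 * β) := div_pos hn0 h2β
      have hlogu : 1 ≤ Real.log (n / (2 * β)) := by
        rw [Real.le_log_iff_exp_le hupos]
        linarith [Real.exp_one_lt_d9]
      have hl2pos : 0 < Real.log 2 := Real.log_pos one_lt_two
      have hTnn : 0 ≤ (2 * β * Real.logb 2 (n / (2 * β))) / c₀ := by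
        refine div_nonneg (mul_nonneg h2β.le ?_) hc₀.le
        exact Real.logb_nonneg one_lt_two (by linarith)
      rcases eq_or_lt_of_le hs0 with hsz | hspos
      · rw [hsumzero hsz.symm]; exact hTnn
      · have hmpos : 0 < m := lt_of_lt_of_le hspos hsm
        have hL : ∀ a, c a * (-Real.log (P1 a)) ≤ c a * (-Real.log (c a)) := by
          intro a
          rcases eq_or_lt_of_le (hc0 a) with h | h
          · rw [← h]; simp
          · exact mul_le_mul_of_nonneg_left
              (neg_le_neg (Real.log_le_log h (hcP1 a))) (hc0 a)
        have key1 : ∀ a : σ, c a * (-Real.log (P1 a)) ≤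
            (s / n - c a) + c a * Real.log (n / s) := by
          intro a
          rcases eq_or_lt_of_le (hc0 a) with h | h
          · rw [← h]
            simp
            positivity
          · have h1 := hL a
            have h2 : Real.log ((s / n) / c a) ≤ (s / n) / c a - 1 :=
              Real.log_le_sub_one_of_pos (div_pos (div_pos hspos hn0) h)
            have h3 : c a * Real.log ((s / n) / c a) ≤ s / n - c a := by
              calc c a * Real.log ((s / n) / c a) ≤ c a * ((s / n) / c a - 1) :=
                    mul_le_mul_of_nonneg_left h2 h.le
                _ = s / n - c a := by field_simp
            rw [Real.log_div (ne_of_gt (div_pos hspos hn0)) (ne_of_gt h),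
              Real.log_div (ne_of_gt hspos) (ne_of_gt hn0)] at h3
            rw [Real.log_div (ne_of_gt hn0) (ne_of_gt hspos)]
            nlinarith [h1, h3]
        have hsum1 : ∑ a : σ, c a * (-Real.log (P1 a)) ≤ s * Real.log (n / s) := by
          have hnn : n * (s / n) = s := by field_simp
          calc ∑ a : σ, c a * (-Real.log (P1 a))
              ≤ ∑ a : σ, ((s / n - c a) + c a * Real.log (n / s)) :=
                Finset.sum_le_sum fun a _ => key1 a
            _ = (∑ _a : σ, s / n) - (∑ a : σ, c a) + (∑ a : σ, c a) * Real.log (n / s) := by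
                rw [Finset.sum_add_distrib, Finset.sum_sub_distrib, Finset.sum_mul]
            _ = n * (s / n) - s + s * Real.log (n / s) := by
                rw [Finset.sum_const, hcsum, nsmul_eq_mul, Finset.card_univ, hn]
            _ = s * Real.log (n / s) := by rw [hnn]; ring
        have hnmpos : 0 < n / m := div_pos hn0 hmpos
        have hlognm : 1 ≤ Real.log (n / m) := by
          rw [Real.le_log_iff_exp_le hnmpos]
          have h1 : (20:ℝ)/3 ≤ n / m := by
            rw [le_div_iff₀ hmpos]; nlinarith
          linarith [Real.exp_one_lt_d9]
        have hsum2 : s * Real.log (n / s) ≤ m * Real.log (n / m) := by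
          have h1 : Real.log (m / s) ≤ m / s - 1 :=
            Real.log_le_sub_one_of_pos (div_pos hmpos hspos)
          have h2 : s * Real.log (m / s) ≤ m - s := by
            calc s * Real.log (m / s) ≤ s * (m / s - 1) :=
                  mul_le_mul_of_nonneg_left h1 hspos.le
              _ = m - s := by field_simp
          have h3 : m - s ≤ (m - s) * Real.log (n / m) :=
            le_mul_of_one_le_right (by linarith [hsm]) hlognm
          rw [Real.log_div (ne_of_gt hn0) (ne_of_gt hspos)]
          rw [Real.log_div (ne_of_gt hn0) (ne_of_gt hmpos)] at h3 ⊢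
          rw [Real.log_div (ne_of_gt hmpos) (ne_of_gt hspos)] at h2
          nlinarith [h2, h3]
        have hfin : m * Real.log (n / m) ≤ (2 * β * Real.logb 2 (n / (2 * β))) / c₀ := by
          have hβne : β ≠ 0 := ne_of_gt hβpos
          have hTeq : (2 * β * Real.logb 2 (n / (2 * β))) / c₀
              = 2 * m * (Real.log (n / (2 * β)) / Real.log 2) := by
            rw [← Real.log_div_log, hmdef]
            field_simp
          have hnm2β : n / m ≤ 2 * (n / (2 * β)) := by
            have e1 : n / m = n * c₀ / β := by
              rw [hmdef, div_div_eq_mul_div]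
            have e2 : 2 * (n / (2 * β)) = n / β := by
              field_simp
            rw [e1, e2]
            gcongr
            nlinarith
          have hlog2u : Real.log (n / m) ≤ Real.log 2 + Real.log (n / (2 * β)) := by
            calc Real.log (n / m) ≤ Real.log (2 * (n / (2 * β))) :=
                  Real.log_le_log hnmpos hnm2β
              _ = Real.log 2 + Real.log (n / (2 * β)) :=
                  Real.log_mul two_ne_zero (ne_of_gt hupos)
          rw [hTeq]
          have hstep : m * Real.log (n / m) ≤ m * (Real.log 2 + Real.log (n / (2 * β))) :=
            mul_le_mul_of_nonneg_left hlog2u hm0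
          refine hstep.trans ?_
          have hrw : 2 * m * (Real.log (n / (2 * β)) / Real.log 2)
              = 2 * m * Real.log (n / (2 * β)) / Real.log 2 := by ring
          rw [hrw, le_div_iff₀ hl2pos]
          have hl2a : Real.log 2 < 0.6931471808 := Real.log_two_lt_d9
          have hl2sq : Real.log 2 * Real.log 2 ≤ 0.5 := by
            have h1 := mul_le_mul hl2a.le hl2a.le hl2pos.le
              (by norm_num : (0:ℝ) ≤ 0.6931471808)
            have h2 : (0.6931471808:ℝ) * 0.6931471808 ≤ 0.5 := by norm_num
            linarith
          have hge : (2 - Real.log 2) * 1 ≤ (2 - Real.log 2) * Real.log (n / (2 * β)) :=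
            mul_le_mul_of_nonneg_left hlogu (by linarith)
          have hkey : Real.log 2 * Real.log 2 ≤
              (2 - Real.log 2) * Real.log (n / (2 * β)) := by linarith
          linarith [mul_nonneg hm0 (sub_nonneg.2 hkey)]
        exact hsum1.trans (hsum2.trans hfin)
  calc mutualInfoNats μ = ∑' q, F q := by
        simp only [mutualInfoNats, hFdef, hpdef, hP1def, hP2def]
    _ = (∑' q, O.indicator F q) + ∑' q, Oᶜ.indicator F q := hsplit
    _ ≤ (∑' q, O.indicator H q) + 2 * k * Real.log 2 := add_le_add hB2 hB1
    _ = (∑ a : σ, c a * (-Real.log (P1 a))) + 2 * k * Real.log 2 := by rw [hOH]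
    _ ≤ (2 * β * Real.logb 2 (n / (2 * β))) / c₀ + 2 * k * Real.log 2 :=
        add_le_add_left hchain _
    _ = 2 * k * Real.log 2 + (2 * β * Real.logb 2 (n / (2 * β))) / c₀ := by ring
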